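/- Let p₁,…,p₄ be points in ℝ³ and suppose the index l is such that ‖∑_{k ≠ l} (pₖ − p_l)/‖pₖ − p_l‖‖ ≤ 1 (with pₖ ≠ p_l for k ≠ l). Then p_l minimizes x ↦ ∑ₖ ‖pₖ − x‖, i.e. p_l is a Fermat–Torricelli point of {p₁,…,p₄}. -/

import Mathlib

open scoped RealInnerProductSpace

/-- Boltyanski criterion: if the sum of the unit vectors from `p l` to the
other three points has norm at most 1, then `p l` is a Fermat–Torricelli
point of the four points. -/
theorem fermat_torricelli_vertex_criterion
    (p : Fin 4 → EuclideanSpace ℝ (Fin 3)) (l : Fin 4)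
    (hne : ∀ k, k ≠ l → p k ≠ p l)
    (hcrit : ‖∑ k ∈ Finset.univ.erase l, ‖p k - p l‖⁻¹ • (p k - p l)‖ ≤ 1) :
    ∀ x : EuclideanSpace ℝ (Fin 3),
      ∑ k, ‖p k - p l‖ ≤ ∑ k, ‖p k - x‖ := by
  intro x
  set u : Fin 4 → EuclideanSpace ℝ (Fin 3) := fun k => ‖p k - p l‖⁻¹ • (p k - p l) with hu
  set S : EuclideanSpace ℝ (Fin 3) := ∑ k ∈ Finset.univ.erase l, u k with hS
  have key : ∀ k ∈ Finset.univ.erase l, ‖p k - p l‖ + ⟪u k, p l - x⟫ ≤ ‖p k - x‖ := by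
    intro k hk
    have hk' : k ≠ l := Finset.ne_of_mem_erase hk
    have hne' : p k - p l ≠ 0 := sub_ne_zero.mpr (hne k hk')
    have hnz : ‖p k - p l‖ ≠ 0 := norm_ne_zero_iff.mpr hne'
    have hnorm : ‖u k‖ = 1 := by
      simp [hu, norm_smul, abs_of_nonneg, inv_mul_cancel₀ hnz]
    have h1 : ⟪u k, p k - p l⟫ = ‖p k - p l‖ := by
      rw [hu]
      simp only [real_inner_smul_left, real_inner_self_eq_norm_sq]
      field_simp
    have h2 : ⟪u k, p k - x⟫ ≤ ‖p k - x‖ := by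
      calc ⟪u k, p k - x⟫ ≤ ‖u k‖ * ‖p k - x‖ := real_inner_le_norm _ _
        _ = ‖p k - x‖ := by rw [hnorm, one_mul]
    have h3 : ⟪u k, p k - x⟫ = ⟪u k, p k - p l⟫ + ⟪u k, p l - x⟫ := by
      rw [← inner_add_right]
      congr 1
      abel
    rw [h3, h1] at h2
    linarith
  have hsum : ∑ k ∈ Finset.univ.erase l, ‖p k - p l‖ + ⟪S, p l - x⟫
      ≤ ∑ k ∈ Finset.univ.erase l, ‖p k - x‖ := by
    rw [hS, sum_inner, ← Finset.sum_add_distrib]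
    exact Finset.sum_le_sum key
  have hCS : -‖p l - x‖ ≤ ⟪S, p l - x⟫ := by
    have h := abs_real_inner_le_norm S (p l - x)
    have h2 : ‖S‖ * ‖p l - x‖ ≤ 1 * ‖p l - x‖ :=
      mul_le_mul_of_nonneg_right hcrit (norm_nonneg _)
    have h3 := neg_abs_le ⟪S, p l - x⟫
    linarith
  have e1 : ∑ k, ‖p k - p l‖ = ‖p l - p l‖ + ∑ k ∈ Finset.univ.erase l, ‖p k - p l‖ :=
    (Finset.add_sum_erase _ _ (Finset.mem_univ l)).symm
  have e2 : ∑ k, ‖p k - x‖ = ‖p l - x‖ + ∑ k ∈ Finset.univ.erase l, ‖p k - x‖ :=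
    (Finset.add_sum_erase _ _ (Finset.mem_univ l)).symm
  rw [e1, e2, sub_self, norm_zero]
  linarith
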